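/- Let D ≥ 1, N ≥ 1, n ≥ D + 1, and let T : (Fin n → Fin N × (Fin D × Fin D)) → ℝ satisfy: (a) within-pair symmetry: T is unchanged when the two Fin D entries of any single slot are swapped (keeping that slot's Fin N label fixed); (b) slot-exchange symmetry: T is unchanged under precomposition with any permutation of the n slots; (c) the cyclic identity: for any two distinct slots k ≠ l with internal labels i, j ∈ Fin N, any fixed assignment of the remaining slots, and any a, b, c, d ∈ Fin D, (T with slots k, l set to (i,(a,b)), (j,(c,d))) + (T with slots k, l set to (i,(a,c)), (j,(d,b))) + (T with slots k, l set to (i,(a,d)), (j,(b,c))) = 0. Then T is identically zero. -/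
import Mathlib


theorem stmt_8 (D N n : ℕ) (hD : 1 ≤ D) (hN : 1 ≤ N) (hn : D + 1 ≤ n)
    (T : (Fin n → Fin N × (Fin D × Fin D)) → ℝ)
    (hwp : ∀ (P : Fin n → Fin N × (Fin D × Fin D)) (k : Fin n),
      T (Function.update P k ((P k).1, ((P k).2.2, (P k).2.1))) = T P)
    (hse : ∀ (P : Fin n → Fin N × (Fin D × Fin D)) (σ : Equiv.Perm (Fin n)),
      T (P ∘ σ) = T P)
    (hcyc : ∀ (P : Fin n → Fin N × (Fin D × Fin D)) (k l : Fin n), k ≠ l →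
      ∀ (i j : Fin N) (a b c d : Fin D),
        T (Function.update (Function.update P k (i, (a, b))) l (j, (c, d))) +
        T (Function.update (Function.update P k (i, (a, c))) l (j, (d, b))) +
        T (Function.update (Function.update P k (i, (a, d))) l (j, (b, c))) = 0) :
    ∀ P : Fin n → Fin N × (Fin D × Fin D), T P = 0 := by
  classical
  -- Swapping two whole slots (values travel with positions) preserves T
  have hswap : ∀ (P : Fin n → Fin N × (Fin D × Fin D)) (k l : Fin n), k ≠ l →
      ∀ p q : Fin N × (Fin D × Fin D),
      T (Function.update (Function.update P k p) l q) =
      T (Function.update (Function.update P k q) l p) := by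
    intro P k l hkl p q
    have hfun : (Function.update (Function.update P k p) l q) ∘ (Equiv.swap k l)
        = Function.update (Function.update P k q) l p := by
      funext m
      simp only [Function.comp_apply]
      rcases eq_or_ne m k with rfl | hmk
      · rw [Equiv.swap_apply_left, Function.update_self,
          Function.update_of_ne hkl, Function.update_self]
      · rcases eq_or_ne m l with rfl | hml
        · rw [Equiv.swap_apply_right, Function.update_of_ne hkl,
            Function.update_self, Function.update_self]
        · rw [Equiv.swap_apply_of_ne_of_ne hmk hml,
            Function.update_of_ne hml, Function.update_of_ne hmk,
            Function.update_of_ne hml, Function.update_of_ne hmk]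
    calc T (Function.update (Function.update P k p) l q)
        = T ((Function.update (Function.update P k p) l q) ∘ (Equiv.swap k l)) :=
          (hse _ _).symm
      _ = T (Function.update (Function.update P k q) l p) := by rw [hfun]
  -- Core vanishing lemma: a slot (x,x) together with another slot carrying x kills T
  have hC0 : ∀ (P : Fin n → Fin N × (Fin D × Fin D)) (k l : Fin n), k ≠ l →
      ∀ (i j : Fin N) (x d : Fin D),
      T (Function.update (Function.update P k (i, (x, x))) l (j, (d, x))) = 0 := by
    intro P k l hkl i j x d
    have key : ∀ i j : Fin N,
        2 * T (Function.update (Function.update P k (i, (x, x))) l (j, (d, x)))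
        + T (Function.update (Function.update P k (j, (x, x))) l (i, (d, x))) = 0 := by
      intro i j
      have H := hcyc P k l hkl i j x x d x
      -- term3 = term1 via within-pair symmetry at slot l
      have h3 := hwp (Function.update (Function.update P k (i, (x, x))) l (j, (x, d))) l
      rw [Function.update_self] at h3
      simp only [Function.update_idem] at h3
      -- middle term: move (x,x) slot to the front by slot exchange, then flip pair at l
      have hB : T (Function.update (Function.update P k (i, (x, d))) l (j, (x, x)))
          = T (Function.update (Function.update P k (j, (x, x))) l (i, (d, x))) := by
        rw [hswap P k l hkl (i, (x, d)) (j, (x, x))]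
        have h4 := hwp (Function.update (Function.update P k (j, (x, x))) l (i, (d, x))) l
        rw [Function.update_self] at h4
        simp only [Function.update_idem] at h4
        exact h4
      rw [hB] at H
      rw [h3] at H
      linarith
    have h1 := key i j
    have h2 := key j i
    linarith [h1, h2]
  -- Helper: normalize a slot containing x so that x is the second pair entry
  have hflip : ∀ (P : Fin n → Fin N × (Fin D × Fin D)) (k : Fin n) (x : Fin D),
      ((P k).2.1 = x ∨ (P k).2.2 = x) →
      ∃ (Q : Fin n → Fin N × (Fin D × Fin D)) (b : Fin D),
        T Q = T P ∧ Q k = ((P k).1, (b, x)) ∧ ∀ m, m ≠ k → Q m = P m := by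
    intro P k x h
    rcases h with h | h
    · refine ⟨Function.update P k ((P k).1, ((P k).2.2, (P k).2.1)), (P k).2.2,
        hwp P k, ?_, ?_⟩
      · rw [Function.update_self, h]
      · intro m hm; exact Function.update_of_ne hm _ _
    · exact ⟨P, (P k).2.1, rfl, by rw [← h], fun m _ => rfl⟩
  -- Lemma C (general form): slot k is (x,x), slot l contains x ⇒ T P = 0
  have lemC : ∀ (P : Fin n → Fin N × (Fin D × Fin D)) (k l : Fin n), k ≠ l →
      ∀ x : Fin D, (P k).2.1 = x → (P k).2.2 = x →
      ((P l).2.1 = x ∨ (P l).2.2 = x) → T P = 0 := by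
    intro P k l hkl x h1 h2 hl
    obtain ⟨Q, b, hTQ, hQl, hQ⟩ := hflip P l x hl
    have hQk : Q k = ((P k).1, (x, x)) := by
      rw [hQ k hkl]
      simp [Prod.ext_iff, h1, h2]
    have hQl' : Q l = ((P l).1, (b, x)) := hQl
    rw [← hTQ]
    have hrepr : Q = Function.update (Function.update Q k ((P k).1, (x, x))) l
        ((P l).1, (b, x)) := by
      rw [← hQk, ← hQl']
      simp [Function.update_eq_self]
    rw [hrepr]
    exact hC0 Q k l hkl _ _ x b
  -- three distinct slots each containing x ⇒ T P = 0
  have hD0 : ∀ (P : Fin n → Fin N × (Fin D × Fin D)) (k l m : Fin n),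
      k ≠ l → k ≠ m → l ≠ m → ∀ (i j : Fin N) (b c x : Fin D),
      ((P m).2.1 = x ∨ (P m).2.2 = x) →
      T (Function.update (Function.update P k (i, (b, x))) l (j, (c, x))) = 0 := by
    intro P k l m hkl hkm hlm i j b c x hm
    have H := hcyc P k l hkl i j b x c x
    -- term3 = term1
    have h3 := hwp (Function.update (Function.update P k (i, (b, x))) l (j, (x, c))) l
    rw [Function.update_self] at h3
    simp only [Function.update_idem] at h3
    rw [h3] at H
    -- middle term vanishes by lemC applied to slots l, m
    have h2 : T (Function.update (Function.update P k (i, (b, c))) l (j, (x, x))) = 0 := by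
      apply lemC _ l m hlm x
      · rw [Function.update_self]
      · rw [Function.update_self]
      · rw [Function.update_of_ne (Ne.symm hlm), Function.update_of_ne (Ne.symm hkm)]
        exact hm
    rw [h2] at H
    linarith
  have hD3 : ∀ (P : Fin n → Fin N × (Fin D × Fin D)) (k l m : Fin n),
      k ≠ l → k ≠ m → l ≠ m → ∀ x : Fin D,
      ((P k).2.1 = x ∨ (P k).2.2 = x) →
      ((P l).2.1 = x ∨ (P l).2.2 = x) →
      ((P m).2.1 = x ∨ (P m).2.2 = x) → T P = 0 := by
    intro P k l m hkl hkm hlm x hk hl hm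
    obtain ⟨Q, b, hTQ, hQk, hQ⟩ := hflip P k x hk
    have hl' : (Q l).2.1 = x ∨ (Q l).2.2 = x := by
      rw [hQ l (Ne.symm hkl)]; exact hl
    obtain ⟨R, c, hTR, hRl, hR⟩ := hflip Q l x hl'
    have hRk : R k = ((P k).1, (b, x)) := by rw [hR k hkl, hQk]
    have hRm : (R m).2.1 = x ∨ (R m).2.2 = x := by
      rw [hR m (Ne.symm hlm), hQ m (Ne.symm hkm)]; exact hm
    rw [← hTQ, ← hTR]
    have hrepr : R = Function.update (Function.update R k ((P k).1, (b, x))) l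
        ((Q l).1, (c, x)) := by
      rw [← hRk, ← hRl]
      simp [Function.update_eq_self]
    rw [hrepr]
    exact hD0 R k l m hkl hkm hlm _ _ b c x hRm
  -- Main argument
  intro P
  -- pigeonhole: some x occurs at least 3 times among all 2n entries
  have hx : ∃ x : Fin D, 2 < (Finset.univ.filter
      fun p : Fin n × Bool => cond p.2 (P p.1).2.1 (P p.1).2.2 = x).card := by
    by_contra hcon
    push_neg at hcon
    have hcard := Finset.card_eq_sum_card_fiberwise
      (f := fun p : Fin n × Bool => cond p.2 (P p.1).2.1 (P p.1).2.2)
      (s := (Finset.univ : Finset (Fin n × Bool)))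
      (t := (Finset.univ : Finset (Fin D))) (fun x _ => Finset.mem_univ _)
    have hle : ∑ x : Fin D, (Finset.univ.filter
        fun p : Fin n × Bool => cond p.2 (P p.1).2.1 (P p.1).2.2 = x).card
        ≤ ∑ _x : Fin D, 2 := Finset.sum_le_sum fun x _ => hcon x
    rw [← hcard] at hle
    simp [Finset.card_univ, Fintype.card_prod, Finset.sum_const, smul_eq_mul] at hle
    omega
  obtain ⟨x, hx⟩ := hx
  rw [Finset.two_lt_card] at hx
  obtain ⟨p₁, hp₁, p₂, hp₂, p₃, hp₃, h12, h13, h23⟩ := hx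
  have hg₁ : cond p₁.2 (P p₁.1).2.1 (P p₁.1).2.2 = x := (Finset.mem_filter.mp hp₁).2
  have hg₂ : cond p₂.2 (P p₂.1).2.1 (P p₂.1).2.2 = x := (Finset.mem_filter.mp hp₂).2
  have hg₃ : cond p₃.2 (P p₃.1).2.1 (P p₃.1).2.2 = x := (Finset.mem_filter.mp hp₃).2
  have entry : ∀ p : Fin n × Bool, cond p.2 (P p.1).2.1 (P p.1).2.2 = x →
      ((P p.1).2.1 = x ∨ (P p.1).2.2 = x) := by
    intro p hp
    rcases p with ⟨k, b⟩
    cases b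
    · exact Or.inr hp
    · exact Or.inl hp
  -- if two occurrences are in the same slot, that slot is (x,x); find a third slot
  have both : ∀ p q : Fin n × Bool, cond p.2 (P p.1).2.1 (P p.1).2.2 = x →
      cond q.2 (P q.1).2.1 (P q.1).2.2 = x → p.1 = q.1 → p ≠ q →
      (P p.1).2.1 = x ∧ (P p.1).2.2 = x := by
    intro p q hp hq h1 hne
    rcases p with ⟨a, pb⟩
    rcases q with ⟨a', qb⟩
    simp only at h1
    subst h1
    have hb : pb ≠ qb := by
      intro h; exact hne (by rw [h])
    cases pb <;> cases qb
    · exact absurd rfl hb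
    · exact ⟨hq, hp⟩
    · exact ⟨hp, hq⟩
    · exact absurd rfl hb
  have third : ∀ p q r : Fin n × Bool, p ≠ q → p ≠ r → q ≠ r → p.1 = q.1 → r.1 ≠ p.1 := by
    intro p q r hpq hpr hqr h1 hcon
    rcases p with ⟨a, pb⟩
    rcases q with ⟨a', qb⟩
    rcases r with ⟨a'', rb⟩
    simp only at h1 hcon
    subst h1; subst hcon
    have hb1 : pb ≠ qb := fun h => hpq (by rw [h])
    have hb2 : pb ≠ rb := fun h => hpr (by rw [h])
    have hb3 : qb ≠ rb := fun h => hqr (by rw [h])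
    cases pb <;> cases qb <;> cases rb <;>
      first | exact hb1 rfl | exact hb2 rfl | exact hb3 rfl
  by_cases hA : p₁.1 = p₂.1
  · have hxx := both p₁ p₂ hg₁ hg₂ hA h12
    have hne := third p₁ p₂ p₃ h12 h13 h23 hA
    exact lemC P p₁.1 p₃.1 (Ne.symm hne) x hxx.1 hxx.2 (entry p₃ hg₃)
  · by_cases hB : p₁.1 = p₃.1
    · have hxx := both p₁ p₃ hg₁ hg₃ hB h13
      have hne := third p₁ p₃ p₂ h13 h12 (Ne.symm h23) hB
      exact lemC P p₁.1 p₂.1 (Ne.symm hne) x hxx.1 hxx.2 (entry p₂ hg₂)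
    · by_cases hC : p₂.1 = p₃.1
      · have hxx := both p₂ p₃ hg₂ hg₃ hC h23
        have hne := third p₂ p₃ p₁ h23 (Ne.symm h12) (Ne.symm h13) hC
        exact lemC P p₂.1 p₁.1 (Ne.symm hne) x hxx.1 hxx.2 (entry p₁ hg₁)
      · exact hD3 P p₁.1 p₂.1 p₃.1 hA hB hC x (entry p₁ hg₁) (entry p₂ hg₂) (entry p₃ hg₃)
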